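/- Let (Ω, F, P) be a probability space and F_0 ⊂ F_1 ⊂ ⋯ a sequence of sub-σ-algebras of F. Let {d_k} and {w_k} be nonnegative F_k-measurable random variables such that E[d_{k+1} | F_k] ≤ (1 + α_k) d_k + w_k almost surely, where α_k ≥ 0 are constants with ∑_{k=1}^∞ α_k < ∞. If ∑_{k=1}^∞ w_k < ∞ almost surely, then {d_k} converges almost surely (to a finite limit). -/

import Mathlib

open MeasureTheory Filter Topology

theorem statement18 {Ω : Type*} [MeasureSpace Ω]
    (hprob : IsProbabilityMeasure (volume : Measure Ω))
    (F : ℕ → MeasurableSpace Ω)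
    (hle : ∀ k, F k ≤ (inferInstance : MeasurableSpace Ω))
    (hmono : Monotone F)
    (d w : ℕ → Ω → ℝ)
    (hd0 : ∀ k ω, 0 ≤ d k ω) (hw0 : ∀ k ω, 0 ≤ w k ω)
    (hdmeas : ∀ k, Measurable[F k] (d k)) (hwmeas : ∀ k, Measurable[F k] (w k))
    (hdint : ∀ k, Integrable (d k)) (hwint : ∀ k, Integrable (w k))
    (α : ℕ → ℝ) (hα : ∀ k, 0 ≤ α k) (hαsum : Summable α)
    (hrec : ∀ k, (volume[d (k + 1)|F k]) ≤ᵐ[volume] fun ω => (1 + α k) * d k ω + w k ω)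
    (hwsum : ∀ᵐ ω, Summable (fun k => w k ω)) :
    ∀ᵐ ω, ∃ c : ℝ, Tendsto (fun k => d k ω) atTop (𝓝 c) := by
  haveI := hprob
  -- the filtration
  set ℱ : Filtration ℕ (inferInstance : MeasurableSpace Ω) := ⟨F, hmono, hle⟩ with hℱdef
  have hℱ : ∀ n, ℱ n = F n := fun n => rfl
  -- the normalizing products
  set β : ℕ → ℝ := fun k => ∏ j ∈ Finset.range k, (1 + α j) with hβdef
  have hβpos : ∀ k, 0 < β k := fun k => Finset.prod_pos fun j _ => by linarith [hα j]
  have hβsucc : ∀ k, β (k + 1) = β k * (1 + α k) := fun k => Finset.prod_range_succ _ k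
  have hβmono : Monotone β := monotone_nat_of_le_succ fun k => by
    rw [hβsucc k]; nlinarith [hβpos k, hα k]
  have hβ1 : ∀ k, 1 ≤ β k := fun k => by
    have := hβmono (Nat.zero_le k)
    simpa [hβdef] using this
  have hβbdd : ∀ k, β k ≤ Real.exp (∑' j, α j) := by
    intro k
    calc β k ≤ ∏ j ∈ Finset.range k, Real.exp (α j) :=
          Finset.prod_le_prod (fun j _ => by linarith [hα j])
            (fun j _ => by linarith [Real.add_one_le_exp (α j)])
      _ = Real.exp (∑ j ∈ Finset.range k, α j) := (Real.exp_sum _ _).symm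
      _ ≤ Real.exp (∑' j, α j) := Real.exp_le_exp.2 (Summable.sum_le_tsum _ (fun j _ => hα j) hαsum)
  obtain ⟨B, hB⟩ : ∃ B, Tendsto β atTop (𝓝 B) :=
    ⟨_, tendsto_atTop_ciSup hβmono ⟨_, fun x ⟨k, hk⟩ => hk ▸ hβbdd k⟩⟩
  have hβinv1 : ∀ k, (β k)⁻¹ ≤ 1 := fun k => inv_le_one_of_one_le₀ (hβ1 k)
  have hβinv0 : ∀ k, 0 ≤ (β k)⁻¹ := fun k => inv_nonneg.2 (hβpos k).le
  -- the partial sums of the normalized noise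
  set S : ℕ → Ω → ℝ := fun n ω => ∑ j ∈ Finset.range n, (β (j + 1))⁻¹ * w j ω with hSdef
  have hSnn : ∀ n ω, 0 ≤ S n ω := fun n ω =>
    Finset.sum_nonneg fun j _ => mul_nonneg (hβinv0 _) (hw0 j ω)
  have hSsucc : ∀ n ω, S (n + 1) ω = S n ω + (β (n + 1))⁻¹ * w n ω := fun n ω =>
    Finset.sum_range_succ _ n
  have hSmono : ∀ ω, Monotone fun n => S n ω := fun ω => monotone_nat_of_le_succ fun n => by
    rw [hSsucc]; nlinarith [mul_nonneg (hβinv0 (n + 1)) (hw0 n ω)]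
  have hSmeas : ∀ n m, n ≤ m + 1 → Measurable[F m] (S n) := by
    intro n m hnm
    apply Finset.measurable_sum
    intro j hj
    exact ((hwmeas j).mono
      (hmono (Nat.lt_succ_iff.mp (lt_of_lt_of_le (Finset.mem_range.1 hj) hnm))) le_rfl).const_mul _
  have hSint : ∀ n, Integrable (S n) := fun n =>
    integrable_finset_sum _ fun j _ => (hwint j).const_mul _
  -- the supermartingale X
  set X : ℕ → Ω → ℝ := fun n ω => (β n)⁻¹ * d n ω - S n ω with hXdef
  have hXint : ∀ n, Integrable (X n) := fun n => ((hdint n).const_mul _).sub (hSint n)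
  have hXmeas : ∀ n, Measurable[F n] (X n) := fun n =>
    ((hdmeas n).const_mul _).sub (hSmeas n n (Nat.le_succ n))
  have hXadp : StronglyAdapted ℱ X := fun n => (hXmeas n).stronglyMeasurable
  have hXlb : ∀ n ω, -S n ω ≤ X n ω := fun n ω => by
    have := mul_nonneg (hβinv0 n) (hd0 n ω); simp only [hXdef]; linarith
  have hX0 : ∀ ω, X 0 ω = d 0 ω := fun ω => by simp [hXdef, hβdef, hSdef]
  have hXsuper : Supermartingale X ℱ volume := by
    refine supermartingale_nat hXadp hXint fun i => ?_
    have hSmi : StronglyMeasurable[F i] (S (i + 1)) :=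
      (hSmeas (i + 1) i le_rfl).stronglyMeasurable
    show volume[X (i + 1)|F i] ≤ᵐ[volume] X i
    have heq : volume[X (i + 1)|F i]
        =ᵐ[volume] fun ω => (β (i + 1))⁻¹ * (volume[d (i + 1)|F i]) ω - S (i + 1) ω := by
      have h1 : X (i + 1) = (β (i + 1))⁻¹ • d (i + 1) - S (i + 1) := by
        funext ω; simp [hXdef, smul_eq_mul]
      rw [h1]
      refine (condExp_sub ((hdint (i + 1)).smul _) (hSint (i + 1)) (F i)).trans ?_
      have h2 := condExp_smul (μ := (volume : Measure Ω)) (m := F i) ((β (i + 1))⁻¹) (d (i + 1))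
      have h3 := condExp_of_stronglyMeasurable (hle i) hSmi (hSint (i + 1))
      filter_upwards [h2] with ω h2ω
      simp only [Pi.sub_apply, h3, h2ω, Pi.smul_apply, smul_eq_mul]
    have e : (β (i + 1))⁻¹ * (1 + α i) = (β i)⁻¹ := by
      have h2 : (1 : ℝ) + α i ≠ 0 := by nlinarith [hα i]
      rw [hβsucc i, mul_inv, mul_assoc, inv_mul_cancel₀ h2, mul_one]
    filter_upwards [heq, hrec i] with ω hω hrecω
    rw [hω]
    calc (β (i + 1))⁻¹ * (volume[d (i + 1)|F i]) ω - S (i + 1) ω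
        ≤ (β (i + 1))⁻¹ * ((1 + α i) * d i ω + w i ω) - S (i + 1) ω := by
          nlinarith [mul_le_mul_of_nonneg_left hrecω (hβinv0 (i + 1))]
      _ = X i ω := by
          simp only [hXdef, hSsucc i ω]
          linear_combination d i ω * e
  -- stopping indicators
  set ξ : ℕ → ℕ → Ω → ℝ := fun M k ω => if S (k + 1) ω ≤ (M : ℝ) then 1 else 0 with hξdef
  have hξadp : ∀ M, StronglyAdapted ℱ (ξ M) := by
    intro M k
    show StronglyMeasurable[F k] (ξ M k)
    refine Measurable.stronglyMeasurable ?_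
    exact Measurable.ite (measurableSet_le (hSmeas (k + 1) k le_rfl) measurable_const)
      measurable_const measurable_const
  set g : ℕ → ℕ → Ω → ℝ :=
    fun M n => ∑ k ∈ Finset.range n, ξ M k * ((-X) (k + 1) - (-X) k) with hgdef
  have hgsub : ∀ M, Submartingale (g M) ℱ volume := by
    intro M
    refine hXsuper.neg.sum_mul_sub (hξadp M) (R := 1) (fun n ω => ?_) (fun n ω => ?_)
    · simp only [hξdef]; split <;> norm_num
    · simp only [hξdef]; split <;> norm_num
  -- pointwise description of the stopped process
  set Y : ℕ → ℕ → Ω → ℝ :=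
    fun M n ω => X 0 ω + ∑ k ∈ Finset.range n, ξ M k ω * (X (k + 1) ω - X k ω) with hYdef
  have hgY : ∀ M n ω, g M n ω = X 0 ω - Y M n ω := by
    intro M n ω
    simp only [hgdef, hYdef, Finset.sum_apply, Pi.mul_apply, Pi.sub_apply, Pi.neg_apply]
    have h : ∀ k ∈ Finset.range n, ξ M k ω * (-X (k + 1) ω - -X k ω)
        = -(ξ M k ω * (X (k + 1) ω - X k ω)) := fun k _ => by ring
    rw [Finset.sum_congr rfl h, Finset.sum_neg_distrib]
    ring
  have hYX : ∀ (M : ℕ) (ω : Ω) (n : ℕ), S n ω ≤ (M : ℝ) → Y M n ω = X n ω := by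
    intro M ω n
    induction n with
    | zero => intro _; simp [hYdef]
    | succ n ih =>
      intro hSn
      have hSn' : S n ω ≤ (M : ℝ) := le_trans (hSmono ω (Nat.le_succ n)) hSn
      have hξ1 : ξ M n ω = 1 := by simp only [hξdef]; rw [if_pos hSn]
      have hthis := ih hSn'
      simp only [hYdef] at hthis ⊢
      rw [Finset.sum_range_succ, ← add_assoc, hthis, hξ1]
      ring
  have hYlb : ∀ (M : ℕ) (ω : Ω) (n : ℕ), -(M : ℝ) ≤ Y M n ω := by
    intro M ω n
    induction n with
    | zero =>
      have h : Y M 0 ω = d 0 ω := by simp [hYdef, hX0]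
      rw [h]
      have h1 := hd0 0 ω
      have h2 : (0 : ℝ) ≤ (M : ℝ) := Nat.cast_nonneg M
      linarith
    | succ n ih =>
      by_cases h : S (n + 1) ω ≤ (M : ℝ)
      · rw [hYX M ω (n + 1) h]
        have h1 := hXlb (n + 1) ω
        linarith
      · have hξ0 : ξ M n ω = 0 := by simp only [hξdef]; rw [if_neg h]
        have heq : Y M (n + 1) ω = Y M n ω := by
          simp only [hYdef, Finset.sum_range_succ, hξ0]; ring
        rw [heq]; exact ih
  -- a.e. convergence of each stopped process
  have hgconv : ∀ M : ℕ, ∀ᵐ ω, ∃ c, Tendsto (fun n => g M n ω) atTop (𝓝 c) := by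
    intro M
    set R0 : ℝ := (∫ ω, |X 0 ω|) + (∫ ω, X 0 ω) + 2 * M with hR0
    refine (hgsub M).exists_ae_tendsto_of_bdd (R := R0.toNNReal) fun n => ?_
    have hgint : Integrable (g M n) := (hgsub M).integrable n
    have hYeq : Y M n = fun ω => X 0 ω - g M n ω := by
      funext ω; rw [hgY]; ring
    have hYint : Integrable (Y M n) := by
      rw [hYeq]; exact (hXint 0).sub hgint
    have hint01 : ∫ ω, g M 0 ω ≤ ∫ ω, g M n ω := by
      have h := (hgsub M).setIntegral_le (Nat.zero_le n) (MeasurableSet.univ)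
      simpa [setIntegral_univ] using h
    have hg0 : ∫ ω, g M 0 ω = 0 := by
      have : g M 0 = fun _ => (0 : ℝ) := by funext ω; simp [hgdef]
      rw [this, integral_zero]
    have hEg : ∫ ω, g M n ω = (∫ ω, X 0 ω) - ∫ ω, Y M n ω := by
      have : ∫ ω, Y M n ω = (∫ ω, X 0 ω) - ∫ ω, g M n ω := by
        rw [hYeq, integral_sub (hXint 0) hgint]
      linarith
    have hEY : ∫ ω, Y M n ω ≤ ∫ ω, X 0 ω := by
      rw [hg0] at hint01; linarith
    have hptw : ∀ ω, ‖g M n ω‖ ≤ |X 0 ω| + Y M n ω + 2 * M := by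
      intro ω
      rw [hgY, Real.norm_eq_abs]
      have h1 := hYlb M ω n
      have h2 : |Y M n ω| ≤ Y M n ω + 2 * M := by
        rcases abs_cases (Y M n ω) with ⟨h, _⟩ | ⟨h, _⟩ <;>
          nlinarith [Nat.cast_nonneg (α := ℝ) M]
      have h3 := abs_sub (X 0 ω) (Y M n ω)
      linarith
    have hRHSint : Integrable (fun ω => |X 0 ω| + Y M n ω + 2 * M) :=
      ((hXint 0).abs.add hYint).add (integrable_const _)
    have hnorm : ∫ ω, ‖g M n ω‖ ≤ R0 := by
      have h := integral_mono hgint.norm hRHSint hptw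
      have h2 : ∫ ω, (Y M n ω + 2 * (M : ℝ)) = (∫ ω, Y M n ω) + 2 * (M : ℝ) := by
        have h3 := integral_add hYint (integrable_const (2 * (M : ℝ)))
        simpa [integral_const, measure_univ] using h3
      have h4 : ∫ ω, (|X 0 ω| + (Y M n ω + 2 * (M : ℝ)))
          = (∫ ω, |X 0 ω|) + ∫ ω, (Y M n ω + 2 * (M : ℝ)) :=
        integral_add (hXint 0).abs (by exact hYint.add (integrable_const _))
      have h5 : ∫ ω, (|X 0 ω| + Y M n ω + 2 * (M : ℝ))
          = ∫ ω, (|X 0 ω| + (Y M n ω + 2 * (M : ℝ))) := by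
        congr 1; funext ω; ring
      rw [h5, h4, h2] at h
      rw [hR0]
      linarith
    have hel : eLpNorm (g M n) 1 volume = ENNReal.ofReal (∫ ω, ‖g M n ω‖) := by
      rw [eLpNorm_one_eq_lintegral_enorm, ← ofReal_integral_norm_eq_lintegral_enorm hgint]
    rw [hel]
    exact ENNReal.ofReal_le_ofReal hnorm
  -- combine everything
  filter_upwards [ae_all_iff.2 hgconv, hwsum] with ω hconv hsum
  have hsum' : Summable fun j => (β (j + 1))⁻¹ * w j ω := by
    refine Summable.of_nonneg_of_le (fun j => mul_nonneg (hβinv0 _) (hw0 j ω))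
      (fun j => ?_) hsum
    calc (β (j + 1))⁻¹ * w j ω ≤ 1 * w j ω :=
          mul_le_mul_of_nonneg_right (hβinv1 (j + 1)) (hw0 j ω)
      _ = w j ω := one_mul _
  set T : ℝ := ∑' j, (β (j + 1))⁻¹ * w j ω with hT
  have hSleT : ∀ n, S n ω ≤ T := fun n =>
    Summable.sum_le_tsum (Finset.range n) (fun j _ => mul_nonneg (hβinv0 _) (hw0 j ω)) hsum'
  set M : ℕ := ⌈T⌉₊ with hM
  have hSM : ∀ n, S n ω ≤ (M : ℝ) := fun n => (hSleT n).trans (Nat.le_ceil T)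
  obtain ⟨c, hc⟩ := hconv M
  have hgX : ∀ n, g M n ω = X 0 ω - X n ω := fun n => by
    rw [hgY, hYX M ω n (hSM n)]
  have hXconv : Tendsto (fun n => X n ω) atTop (𝓝 (X 0 ω - c)) := by
    refine (tendsto_const_nhds.sub hc).congr fun n => ?_
    rw [hgX n]; ring
  have hSconv : Tendsto (fun n => S n ω) atTop (𝓝 T) := hsum'.hasSum.tendsto_sum_nat
  have h2 : Tendsto (fun n => (β n)⁻¹ * d n ω) atTop (𝓝 ((X 0 ω - c) + T)) := by
    refine (hXconv.add hSconv).congr fun n => ?_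
    simp only [hXdef]; ring
  refine ⟨B * ((X 0 ω - c) + T), ?_⟩
  refine (hB.mul h2).congr fun n => ?_
  rw [← mul_assoc, mul_inv_cancel₀ (hβpos n).ne', one_mul]
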